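/- Let X be a subshift over a finite alphabet Λ, and consider the map Ξ : X → Ω_X, Ξ(x) = ξ_x. Then the following are equivalent: (i) X is a subshift of finite type; (ii) Ξ is onto Ω_X; (iii) Ξ is continuous; (iv) Ξ is a homeomorphism from X onto Ω_X. -/

import Mathlib

open scoped Classical

namespace SubshiftPaper

variable {Λ : Type}

/-- The left shift on infinite words. -/
def shiftMap (x : ℕ → Λ) : ℕ → Λ := fun n => x (n + 1)

/-- Concatenation of a finite word with an infinite word. -/
def cat (α : List Λ) (y : ℕ → Λ) : ℕ → Λ := fun n => α.getD n (y (n - α.length))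

/-- `α` is a prefix of the infinite word `x`. -/
def Pref (α : List Λ) (x : ℕ → Λ) : Prop := ∀ (i : ℕ) (h : i < α.length), x i = α[i]

/-- The tail of `x` after `n` letters. -/
def tail (x : ℕ → Λ) (n : ℕ) : ℕ → Λ := fun i => x (n + i)

/-- `α` occurs in `x` at position `n`. -/
def OccursAt (α : List Λ) (x : ℕ → Λ) (n : ℕ) : Prop :=
  ∀ (i : ℕ) (h : i < α.length), x (n + i) = α[i]

/-- `α` occurs in `x` (as a contiguous block of letters). -/
def Occurs (α : List Λ) (x : ℕ → Λ) : Prop := ∃ n, OccursAt α x n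

/-- `X` is a subshift: a nonempty closed shift-invariant subset. -/
def IsSubshift [TopologicalSpace Λ] (X : Set (ℕ → Λ)) : Prop :=
  X.Nonempty ∧ IsClosed X ∧ ∀ x ∈ X, shiftMap x ∈ X

/-- The set of infinite words avoiding all words in `F`. -/
def ForbidSpace (F : Set (List Λ)) : Set (ℕ → Λ) := {x | ∀ α ∈ F, ¬ Occurs α x}

/-- `X` is a subshift of finite type. -/
def IsSFT (X : Set (ℕ → Λ)) : Prop := ∃ F : Set (List Λ), F.Finite ∧ X = ForbidSpace F

/-- The follower set of a finite word. -/
def follower (X : Set (ℕ → Λ)) (α : List Λ) : Set (ℕ → Λ) := {y | y ∈ X ∧ cat α y ∈ X}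

/-- The cylinder of a finite word. -/
def cylinder (X : Set (ℕ → Λ)) (α : List Λ) : Set (ℕ → Λ) := {x | x ∈ X ∧ Pref α x}

/-- The language of `X`. -/
def Language (X : Set (ℕ → Λ)) : Set (List Λ) := {α | ∃ x ∈ X, Occurs α x}

/-- The embedding of finite words into the free group. -/
def wd (α : List Λ) : FreeGroup Λ := (α.map FreeGroup.of).prod

/-- Indicator function of a set of group elements. -/
noncomputable def chi (s : Set (FreeGroup Λ)) : FreeGroup Λ → Bool :=
  fun g => if g ∈ s then true else false

/-- The set `ξ_x ⊆ 𝔽`. -/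
def xiSet [DecidableEq Λ] (X : Set (ℕ → Λ)) (x : ℕ → Λ) : Set (FreeGroup Λ) :=
  {g | ∃ α β : List Λ, g = wd α * (wd β)⁻¹ ∧
        FreeGroup.norm g = α.length + β.length ∧
        Pref α x ∧ tail x α.length ∈ follower X α ∩ follower X β}

/-- `ξ_x` as an element of `2^𝔽`. -/
noncomputable def xiB [DecidableEq Λ] (X : Set (ℕ → Λ)) (x : ℕ → Λ) : FreeGroup Λ → Bool :=
  chi (xiSet X x)

/-- The spectrum `Ω_X`: the closure of `{ξ_x : x ∈ X}` in `2^𝔽`. -/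
noncomputable def Omega [DecidableEq Λ] (X : Set (ℕ → Λ)) : Set (FreeGroup Λ → Bool) :=
  closure ((fun x => xiB X x) '' X)

/-- Left translation of an element of `2^𝔽`. -/
def translate (g : FreeGroup Λ) (ξ : FreeGroup Λ → Bool) : FreeGroup Λ → Bool :=
  fun h => ξ (g⁻¹ * h)

/-- `x` is the stem of `ξ`: `ξ ∩ 𝔽₊` is exactly the set of prefixes of `x`. -/
def IsStem (ξ : FreeGroup Λ → Bool) (x : ℕ → Λ) : Prop :=
  {g | ξ g = true} ∩ {g | ∃ α : List Λ, g = wd α} =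
    {g | ∃ α : List Λ, g = wd α ∧ Pref α x}

/-- `x` is the stem of `ξ` at `g`: `ξ ∩ g𝔽₊ = {gα : α is a prefix of x}`. -/
def IsStemAt (ξ : FreeGroup Λ → Bool) (g : FreeGroup Λ) (x : ℕ → Λ) : Prop :=
  {h | ξ h = true} ∩ {h | ∃ α : List Λ, h = g * wd α} =
    {h | ∃ α : List Λ, h = g * wd α ∧ Pref α x}

/-- The orbit of `ξ` under the spectral partial action. -/
def Orbit (ξ : FreeGroup Λ → Bool) : Set (FreeGroup Λ → Bool) :=
  {η | ∃ g : FreeGroup Λ, ξ g⁻¹ = true ∧ η = translate g ξ}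

/-- Topological freeness of the spectral partial action. -/
noncomputable def TopFree [DecidableEq Λ] (X : Set (ℕ → Λ)) : Prop :=
  ∀ g : FreeGroup Λ, g ≠ 1 →
    ∀ U : Set (FreeGroup Λ → Bool), IsOpen U →
      (U ∩ Omega X ⊆ {ξ | ξ g⁻¹ = true ∧ translate g ξ = ξ}) → U ∩ Omega X = ∅

/-- The periodic infinite word `γ^∞`. -/
noncomputable def perInf [Nonempty Λ] (γ : List Λ) : ℕ → Λ :=
  fun n => γ.getD (n % γ.length) (Classical.arbitrary Λ)

/-- `n`-fold concatenation of a finite word with itself. -/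
def rep : ℕ → List Λ → List Λ
  | 0, _ => []
  | n + 1, γ => γ ++ rep n γ

/-- `γ` is a circuit relative to `X`. -/
noncomputable def IsCircuit [Nonempty Λ] (X : Set (ℕ → Λ)) (γ : List Λ) : Prop :=
  γ ≠ [] ∧ perInf γ ∈ X

/-- `y` is an exit for the circuit `γ`. -/
noncomputable def IsExit [Nonempty Λ] (X : Set (ℕ → Λ)) (γ : List Λ) (y : ℕ → Λ) : Prop :=
  y ≠ perInf γ ∧ cat γ y ∈ X

/-- `z` is a strong exit for the circuit `γ`. -/
noncomputable def IsStrongExit [Nonempty Λ] (X : Set (ℕ → Λ)) (γ : List Λ) (z : ℕ → Λ) : Prop :=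
  z ≠ perInf γ ∧ ∀ n : ℕ, cat (rep n γ) z ∈ X

/-- The sets `X_g` of the standard partial action. -/
def Xg [DecidableEq Λ] (X : Set (ℕ → Λ)) (g : FreeGroup Λ) : Set (ℕ → Λ) :=
  {x | ∃ α β : List Λ, g = wd α * (wd β)⁻¹ ∧
        FreeGroup.norm g = α.length + β.length ∧
        ∃ y ∈ follower X α ∩ follower X β, x = cat α y}

/-- `x` is a fixed point for `θ_g`. -/
def IsThetaFixed [DecidableEq Λ] (X : Set (ℕ → Λ)) (g : FreeGroup Λ) (x : ℕ → Λ) : Prop :=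
  ∃ α β : List Λ, g = wd α * (wd β)⁻¹ ∧
    FreeGroup.norm g = α.length + β.length ∧
    ∃ y ∈ follower X α ∩ follower X β, x = cat β y ∧ cat α y = x

/-- `x` may be collectively reached from the finite set `B`. -/
def CollReached (X : Set (ℕ → Λ)) (B : Finset (List Λ)) (x : ℕ → Λ) : Prop :=
  ∃ α γ : List Λ, Pref α x ∧ ∀ β ∈ B, cat (β ++ γ) (tail x α.length) ∈ X

/-- `X` is collectively cofinal. -/
def CollCofinal (X : Set (ℕ → Λ)) : Prop :=
  ∀ B : Finset (List Λ), ↑B ⊆ Language X → (⋂ β ∈ B, follower X β).Nonempty →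
    ∀ x ∈ X, CollReached X B x

/-- `X` is strongly cofinal. -/
def StrongCofinal (X : Set (ℕ → Λ)) : Prop :=
  ∀ β ∈ Language X, ∃ M : ℕ, ∀ x ∈ X, ∃ α γ : List Λ, Pref α x ∧
    cat (β ++ γ) (tail x α.length) ∈ X ∧ α.length + γ.length ≤ M

/-- The even shift. -/
def evenShift : Set (ℕ → Fin 2) :=
  ForbidSpace {w | ∃ n : ℕ, w = 0 :: (List.replicate (2 * n + 1) 1 ++ [0])}



section Aux

variable {Λ : Type}


lemma tail_zero (x : ℕ → Λ) : tail x 0 = x := funext fun i => by simp [tail]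

lemma cat_nil (y : ℕ → Λ) : cat ([] : List Λ) y = y := funext fun n => by simp [cat]

lemma cat_eval_lt (α : List Λ) (y : ℕ → Λ) {n : ℕ} (h : n < α.length) :
    cat α y n = α[n] := by simp [cat, List.getD_eq_getElem, h]

lemma cat_eval_ge (α : List Λ) (y : ℕ → Λ) {n : ℕ} (h : α.length ≤ n) :
    cat α y n = y (n - α.length) := by
  simp only [cat]; rw [List.getD_eq_default]; exact h

lemma pref_cat (α : List Λ) (y : ℕ → Λ) : Pref α (cat α y) :=
  fun i h => cat_eval_lt α y h

lemma cat_tail {α : List Λ} {x : ℕ → Λ} (h : Pref α x) : cat α (tail x α.length) = x := by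
  funext n
  rcases lt_or_ge n α.length with hn | hn
  · rw [cat_eval_lt α _ hn, h n hn]
  · rw [cat_eval_ge α _ hn]; simp only [tail]; congr 1; omega

lemma tail_mem {X : Set (ℕ → Λ)} (hS : ∀ x ∈ X, shiftMap x ∈ X) {x : ℕ → Λ} (hx : x ∈ X) :
    ∀ n, tail x n ∈ X := by
  intro n
  induction n with
  | zero => rwa [tail_zero]
  | succ n ih =>
    have : tail x (n + 1) = shiftMap (tail x n) := by
      funext i; simp only [tail, shiftMap]; congr 1; omega
    rw [this]; exact hS _ ih



def pw (α : List Λ) : List (Λ × Bool) := α.map (fun a => (a, true))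

@[simp] lemma pw_length (α : List Λ) : (pw α).length = α.length := by simp [pw]

lemma wd_eq_mk (α : List Λ) : wd α = FreeGroup.mk (pw α) := by
  induction α with
  | nil => simp [wd, pw, FreeGroup.one_eq_mk]
  | cons a α ih =>
    have : FreeGroup.of a = FreeGroup.mk [(a, true)] := rfl
    simp only [wd, pw, List.map_cons, List.prod_cons] at *
    rw [ih, this, FreeGroup.mul_mk]; rfl

lemma wd_nil : wd ([] : List Λ) = 1 := by simp [wd]

def Wrd (α β : List Λ) : List (Λ × Bool) := pw α ++ FreeGroup.invRev (pw β)

lemma Wrd_length (α β : List Λ) : (Wrd α β).length = α.length + β.length := by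
  simp [Wrd, FreeGroup.invRev_length]

lemma mk_Wrd (α β : List Λ) : FreeGroup.mk (Wrd α β) = wd α * (wd β)⁻¹ := by
  rw [wd_eq_mk, wd_eq_mk, FreeGroup.inv_mk, FreeGroup.mul_mk]; rfl

lemma reduce_pw [DecidableEq Λ] (α : List Λ) : FreeGroup.reduce (pw α) = pw α := by
  induction α with
  | nil => rfl
  | cons a α ih =>
    show FreeGroup.reduce ((a, true) :: pw α) = _
    rw [FreeGroup.reduce.cons, ih]
    cases α with
    | nil => rfl
    | cons b β => simp [pw]

lemma toWord_wd [DecidableEq Λ] (α : List Λ) : (wd α).toWord = pw α := by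
  rw [wd_eq_mk, FreeGroup.toWord_mk, reduce_pw]

lemma norm_wd [DecidableEq Λ] (α : List Λ) : FreeGroup.norm (wd α) = α.length := by
  simp [FreeGroup.norm, toWord_wd]

lemma toWord_eq_Wrd [DecidableEq Λ] {α β : List Λ}
    (h : FreeGroup.norm (wd α * (wd β)⁻¹) = α.length + β.length) :
    (wd α * (wd β)⁻¹).toWord = Wrd α β := by
  have h1 : (wd α * (wd β)⁻¹).toWord = FreeGroup.reduce (Wrd α β) := by
    rw [← mk_Wrd, FreeGroup.toWord_mk]
  have hred : FreeGroup.Red (Wrd α β) (FreeGroup.reduce (Wrd α β)) := FreeGroup.reduce.red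
  have hlen : (FreeGroup.reduce (Wrd α β)).length = (Wrd α β).length := by
    rw [← h1, Wrd_length]; exact h
  rw [h1, hred.sublist.eq_of_length hlen]

lemma pw_inj {α α' : List Λ} (h : pw α = pw α') : α = α' := by
  have := congrArg (List.map Prod.fst) h
  simp only [pw, List.map_map] at this
  rw [show (Prod.fst ∘ fun a : Λ => (a, true)) = id from rfl, List.map_id, List.map_id] at this
  exact this

lemma snd_mem_invRev {β : List Λ} {p : Λ × Bool} (h : p ∈ FreeGroup.invRev (pw β)) :
    p.2 = false := by
  simp only [FreeGroup.invRev, pw, List.mem_reverse, List.map_map, List.mem_map] at h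
  obtain ⟨a, -, rfl⟩ := h
  rfl

lemma Wrd_inj {α β α' β' : List Λ} (h : Wrd α β = Wrd α' β') : α = α' ∧ β = β' := by
  induction α generalizing α' with
  | nil =>
    cases α' with
    | nil =>
      refine ⟨rfl, ?_⟩
      have : FreeGroup.invRev (pw β) = FreeGroup.invRev (pw β') := by
        simpa [Wrd, pw] using h
      exact pw_inj (FreeGroup.invRev_injective this)
    | cons a' t' =>
      exfalso
      have hmem : ((a', true) : Λ × Bool) ∈ FreeGroup.invRev (pw β) := by
        have : Wrd [] β = (a', true) :: (pw t' ++ FreeGroup.invRev (pw β')) := by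
          simpa [Wrd, pw] using h
        rw [show Wrd ([] : List Λ) β = FreeGroup.invRev (pw β) by simp [Wrd, pw]] at this
        rw [this]; exact List.mem_cons_self
      simpa using snd_mem_invRev hmem
  | cons a t ih =>
    cases α' with
    | nil =>
      exfalso
      have hmem : ((a, true) : Λ × Bool) ∈ FreeGroup.invRev (pw β') := by
        have : (a, true) :: (pw t ++ FreeGroup.invRev (pw β)) = FreeGroup.invRev (pw β') := by
          simpa [Wrd, pw] using h
        rw [← this]; exact List.mem_cons_self
      simpa using snd_mem_invRev hmem
    | cons a' t' =>
      have h' : (a, true) :: Wrd t β = (a', true) :: Wrd t' β' := by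
        simpa [Wrd, pw] using h
      obtain ⟨h1, h2⟩ := List.cons_eq_cons.mp h'
      obtain ⟨rfl, rfl⟩ := ih h2
      exact ⟨by rw [(Prod.mk.injEq _ _ _ _).mp h1 |>.1], rfl⟩


lemma decomp_unique [DecidableEq Λ] {g : FreeGroup Λ} {α β α' β' : List Λ}
    (h : g = wd α * (wd β)⁻¹) (hn : FreeGroup.norm g = α.length + β.length)
    (h' : g = wd α' * (wd β')⁻¹) (hn' : FreeGroup.norm g = α'.length + β'.length) :
    α = α' ∧ β = β' := by
  apply Wrd_inj
  rw [← toWord_eq_Wrd (h ▸ hn), ← toWord_eq_Wrd (h' ▸ hn'), ← h, ← h']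

lemma xiB_eq_true_iff [DecidableEq Λ] {X : Set (ℕ → Λ)} {x : ℕ → Λ} {g : FreeGroup Λ} :
    xiB X x g = true ↔ g ∈ xiSet X x := by
  by_cases h : g ∈ xiSet X x <;> simp [xiB, chi, h]

lemma mem_xiSet_wd [DecidableEq Λ] [TopologicalSpace Λ] {X : Set (ℕ → Λ)} (hX : IsSubshift X)
    {x : ℕ → Λ} (hx : x ∈ X) (α : List Λ) :
    wd α ∈ xiSet X x ↔ Pref α x := by
  constructor
  · rintro ⟨α', β', hg, hn, hpref, -⟩
    obtain ⟨rfl, rfl⟩ := decomp_unique (g := wd α) (α := α) (β := ([] : List Λ))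
      (by rw [wd_nil, inv_one, mul_one]) (by simp [norm_wd]) hg hn
    exact hpref
  · intro hpref
    have htail : tail x α.length ∈ X := tail_mem hX.2.2 hx _
    refine ⟨α, [], by rw [wd_nil, inv_one, mul_one], by simp [norm_wd], hpref, ?_, ?_⟩
    · exact ⟨htail, by rw [cat_tail hpref]; exact hx⟩
    · exact ⟨htail, by rw [cat_nil]; exact htail⟩

lemma mem_xiSet_inv [DecidableEq Λ] [TopologicalSpace Λ] {X : Set (ℕ → Λ)} (hX : IsSubshift X)
    {x : ℕ → Λ} (hx : x ∈ X) (a : Λ) :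
    (wd [a])⁻¹ ∈ xiSet X x ↔ cat [a] x ∈ X := by
  constructor
  · rintro ⟨α', β', hg, hn, -, -, hmem⟩
    obtain ⟨rfl, rfl⟩ := decomp_unique (g := (wd [a])⁻¹) (α := []) (β := [a])
      (by rw [wd_nil, one_mul]) (by simp [norm_wd]) hg hn
    obtain ⟨-, h2⟩ := hmem
    simp only [List.length_nil, tail_zero] at h2
    exact h2
  · intro h
    refine ⟨[], [a], by rw [wd_nil, one_mul], by simp [norm_wd], fun i hi => by simp at hi, ?_, ?_⟩
    · simp only [List.length_nil, tail_zero]; exact ⟨hx, by rw [cat_nil]; exact hx⟩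
    · simp only [List.length_nil, tail_zero]; exact ⟨hx, h⟩


lemma xi_injOn [DecidableEq Λ] [TopologicalSpace Λ] {X : Set (ℕ → Λ)} (hX : IsSubshift X) :
    Set.InjOn (fun x => xiB X x) X := by
  intro x hx x' hx' h
  simp only at h
  funext n
  set α : List Λ := List.ofFn (fun i : Fin (n+1) => x i) with hα
  have hget : ∀ i (hi : i < α.length), α[i] = x i := by
    intro i hi
    simp only [hα, List.getElem_ofFn]
  have hpref : Pref α x := fun i hi => (hget i hi).symm
  have h1 : xiB X x (wd α) = true := xiB_eq_true_iff.2 ((mem_xiSet_wd hX hx α).2 hpref)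
  have h2 : xiB X x' (wd α) = true := by rw [← h]; exact h1
  have hpref' : Pref α x' := (mem_xiSet_wd hX hx' α).1 (xiB_eq_true_iff.1 h2)
  have hn : n < α.length := by simp [hα]
  rw [hpref n hn, hpref' n hn]

lemma isOpen_agree [TopologicalSpace Λ] [DiscreteTopology Λ] (x : ℕ → Λ) (K : ℕ) :
    IsOpen {x' : ℕ → Λ | ∀ i < K, x' i = x i} := by
  have he : {x' : ℕ → Λ | ∀ i < K, x' i = x i}
      = ⋂ i ∈ Finset.range K, {x' : ℕ → Λ | x' i = x i} := by
    ext x'; simp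
  rw [he]
  refine isOpen_biInter_finset fun i _ => ?_
  show IsOpen ((fun x' : ℕ → Λ => x' i) ⁻¹' {x i})
  exact IsOpen.preimage (continuous_apply i) (isOpen_discrete ({x i} : Set Λ))

lemma continuousOn_of_locallyConstant [TopologicalSpace Λ] {X : Set (ℕ → Λ)}
    {f : (ℕ → Λ) → Bool}
    (h : ∀ x ∈ X, ∃ U : Set (ℕ → Λ), IsOpen U ∧ x ∈ U ∧ ∀ x' ∈ U ∩ X, f x' = f x) :
    ContinuousOn f X := by
  intro x hx
  obtain ⟨U, hU, hxU, hconst⟩ := h x hx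
  have hmem : U ∩ X ∈ nhdsWithin x X :=
    Filter.inter_mem (mem_nhdsWithin_of_mem_nhds (hU.mem_nhds hxU)) self_mem_nhdsWithin
  have hev : f =ᶠ[nhdsWithin x X] fun _ => f x := by
    filter_upwards [hmem] with x' hx' using hconst x' hx'
  exact (continuousWithinAt_const (b := f x)).congr_of_eventuallyEq hev rfl

lemma continuousOn_pi' {X : Set (ℕ → Λ)} [TopologicalSpace Λ]
    {f : (ℕ → Λ) → (FreeGroup Λ → Bool)}
    (h : ∀ g, ContinuousOn (fun x => f x g) X) : ContinuousOn f X := by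
  rw [continuousOn_iff_continuous_restrict]
  exact continuous_pi_iff.2 fun g => continuousOn_iff_continuous_restrict.1 (h g)

lemma window_lemma {F : Set (List Λ)} {M : ℕ} (hM : ∀ w ∈ F, w.length ≤ M)
    {β : List Λ} {y y' : ℕ → Λ}
    (hy' : y' ∈ ForbidSpace F) (hagree : ∀ i < M, y i = y' i)
    (h : cat β y ∈ ForbidSpace F) : cat β y' ∈ ForbidSpace F := by
  rintro w hw ⟨n, hocc⟩
  by_cases hn : β.length ≤ n
  · refine hy' w hw ⟨n - β.length, fun i hi => ?_⟩
    have e : y' (n - β.length + i) = cat β y' (n + i) := by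
      rw [cat_eval_ge β y' (by omega)]
      congr 1; omega
    rw [e]; exact hocc i hi
  · refine h w hw ⟨n, fun i hi => ?_⟩
    rw [← hocc i hi]
    rcases lt_or_ge (n + i) β.length with h2 | h2
    · rw [cat_eval_lt β y h2, cat_eval_lt β y' h2]
    · rw [cat_eval_ge β y h2, cat_eval_ge β y' h2]
      exact hagree _ (by have := hM w hw; omega)

lemma sft_continuousOn [DecidableEq Λ] [TopologicalSpace Λ] [DiscreteTopology Λ]
    {X : Set (ℕ → Λ)} (hX : IsSubshift X) (hsft : IsSFT X) :
    ContinuousOn (fun x => xiB X x) X := by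
  obtain ⟨F, hFfin, hXF⟩ := hsft
  obtain ⟨M, hM⟩ : ∃ M : ℕ, ∀ w ∈ F, w.length ≤ M := by
    obtain ⟨M, hM⟩ := (hFfin.image List.length).bddAbove
    exact ⟨M, fun w hw => hM (Set.mem_image_of_mem _ hw)⟩
  apply continuousOn_pi'
  intro g
  by_cases hg : ∃ α β : List Λ, g = wd α * (wd β)⁻¹ ∧ FreeGroup.norm g = α.length + β.length
  · obtain ⟨α, β, hgd, hn⟩ := hg
    -- key transfer claim
    have key : ∀ x ∈ X, ∀ x' ∈ X, (∀ i < α.length + M, x i = x' i) →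
        xiB X x g = true → xiB X x' g = true := by
      intro x hx x' hx' hagree h1
      obtain ⟨α₀, β₀, hg₀, hn₀, hpref₀, hmem₀⟩ := xiB_eq_true_iff.1 h1
      obtain ⟨rfl, rfl⟩ := decomp_unique hgd hn hg₀ hn₀
      apply xiB_eq_true_iff.2
      have hpref' : Pref α x' := by
        intro i hi
        rw [← hagree i (by omega)]; exact hpref₀ i hi
      have htail' : tail x' α.length ∈ X := tail_mem hX.2.2 hx' _
      refine ⟨α, β, hgd, hn, hpref', ⟨htail', by rw [cat_tail hpref']; exact hx'⟩, htail', ?_⟩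
      -- cat β (tail x' α.length) ∈ X
      have hcat : cat β (tail x α.length) ∈ X := hmem₀.2.2
      rw [hXF] at htail' hcat ⊢
      refine window_lemma hM htail' (fun i hi => ?_) hcat
      simp only [tail]
      exact hagree (α.length + i) (by omega)
    apply continuousOn_of_locallyConstant
    intro x hx
    refine ⟨{x' : ℕ → Λ | ∀ i < α.length + M, x' i = x i}, isOpen_agree x _, fun i _ => rfl, ?_⟩
    rintro x' ⟨hx'U, hx'X⟩
    cases h1 : xiB X x g
    · cases h2 : xiB X x' g
      · rfl
      · exact absurd (key x' hx'X x hx (fun i hi => hx'U i hi) h2) (by simp [h1])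
    · exact key x hx x' hx'X (fun i hi => (hx'U i hi).symm) h1
  · have hfalse : ∀ x : ℕ → Λ, xiB X x g = false := by
      intro x
      rw [Bool.eq_false_iff]
      intro h1
      obtain ⟨α, β, hgd, hn, -⟩ := xiB_eq_true_iff.1 h1
      exact hg ⟨α, β, hgd, hn⟩
    have : (fun x : ℕ → Λ => xiB X x g) = fun _ => false := funext hfalse
    rw [this]
    exact continuousOn_const


lemma cont_to_surj [Fintype Λ] [DecidableEq Λ] [TopologicalSpace Λ]
    {X : Set (ℕ → Λ)} (hX : IsSubshift X)
    (hcont : ContinuousOn (fun x => xiB X x) X) :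
    Omega X ⊆ (fun x => xiB X x) '' X := by
  have hXc : IsCompact X := hX.2.1.isCompact
  have himg : IsCompact ((fun x => xiB X x) '' X) := hXc.image_of_continuousOn hcont
  exact closure_minimal (subset_refl _) himg.isClosed

lemma ultra_lim {β : Type} [TopologicalSpace β] [CompactSpace β] (𝒰 : Ultrafilter ℕ)
    (f : ℕ → β) : ∃ b, Filter.Tendsto f (𝒰 : Filter ℕ) (nhds b) := by
  obtain ⟨b, -, hb⟩ := isCompact_univ.ultrafilter_le_nhds (𝒰.map f) (by simp)
  exact ⟨b, hb⟩

lemma ultra_eventually {β : Type} [TopologicalSpace β] [DiscreteTopology β]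
    {𝒰 : Ultrafilter ℕ} {f : ℕ → β} {b : β}
    (h : Filter.Tendsto f (𝒰 : Filter ℕ) (nhds b)) : ∀ᶠ M in (𝒰 : Filter ℕ), f M = b := by
  rw [nhds_discrete] at h
  exact Filter.tendsto_pure.mp h

/-- `α` is a prefix of some element of `X`. -/
def PrefIn (X : Set (ℕ → Λ)) (α : List Λ) : Prop := ∃ x ∈ X, Pref α x

/-- The finite segment of `y` of length `L` starting at `j`. -/
def seg (y : ℕ → Λ) (j L : ℕ) : List Λ := List.ofFn (fun i : Fin L => y (j + i.1))

@[simp] lemma seg_length (y : ℕ → Λ) (j L : ℕ) : (seg y j L).length = L := by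
  simp [seg]

lemma seg_get (y : ℕ → Λ) {j L i : ℕ} (h : i < (seg y j L).length) :
    (seg y j L)[i] = y (j + i) := by
  simp [seg]

lemma pref_seg_iff {y x : ℕ → Λ} {j L : ℕ} :
    Pref (seg y j L) x ↔ ∀ i < L, x i = y (j + i) := by
  constructor
  · intro h i hi
    rw [h i (by simpa using hi), seg_get]
  · intro h i hi
    rw [seg_get _ hi]
    exact h i (by simpa using hi)

lemma prefIn_seg_mono [TopologicalSpace Λ] {X : Set (ℕ → Λ)}
    (hS : ∀ x ∈ X, shiftMap x ∈ X) {y : ℕ → Λ} {j L j' L' : ℕ}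
    (h : PrefIn X (seg y j L)) (hj : j ≤ j') (hL : j' + L' ≤ j + L) :
    PrefIn X (seg y j' L') := by
  obtain ⟨x, hx, hpref⟩ := h
  rw [pref_seg_iff] at hpref
  refine ⟨tail x (j' - j), tail_mem hS hx _, pref_seg_iff.2 fun i hi => ?_⟩
  have e1 : tail x (j' - j) i = x (j' - j + i) := rfl
  rw [e1, hpref (j' - j + i) (by omega)]
  congr 1; omega

lemma seg_cons (y : ℕ → Λ) (j L : ℕ) : seg y j (L + 1) = y j :: seg y (j + 1) L := by
  apply List.ext_getElem (by simp)
  intro i h1 h2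
  rcases Nat.eq_zero_or_pos i with rfl | hi
  · simp [seg_get]
  · rw [seg_get, List.getElem_cons (w := h2)]
    have hL : i - 1 < L := by simp at h1; omega
    rw [dif_neg (by omega)]
    simp only [seg, List.getElem_ofFn]
    congr 1; omega

lemma seg_snoc (y : ℕ → Λ) (j L : ℕ) : seg y j (L + 1) = seg y j L ++ [y (j + L)] := by
  apply List.ext_getElem (by simp)
  intro i h1 h2
  rw [seg_get]
  rcases lt_or_ge i L with hi | hi
  · rw [List.getElem_append_left (by simpa using hi), seg_get]
  · have : i = L := by simp at h2; omega
    subst this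
    rw [List.getElem_append_right (by simp)]
    simp

lemma closed_sep [TopologicalSpace Λ] [DiscreteTopology Λ] {X : Set (ℕ → Λ)}
    (hcl : IsClosed X) {y : ℕ → Λ} (hy : y ∉ X) :
    ∃ N, ∀ x ∈ X, ¬ (∀ i < N, x i = y i) := by
  by_contra hcon
  push_neg at hcon
  choose x hxX hxy using hcon
  have htend : Filter.Tendsto x Filter.atTop (nhds y) := by
    rw [tendsto_pi_nhds]
    intro i
    rw [nhds_discrete, Filter.tendsto_pure]
    filter_upwards [Filter.eventually_ge_atTop (i + 1)] with N hN using hxy N i (by omega)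
  exact hy (hcl.mem_of_tendsto htend (Filter.Eventually.of_forall hxX))


lemma offender [Fintype Λ] [DecidableEq Λ] [TopologicalSpace Λ] [DiscreteTopology Λ]
    {X : Set (ℕ → Λ)} (hX : IsSubshift X) (hnot : ¬ IsSFT X) (M : ℕ) :
    ∃ (a : Λ) (w : List Λ) (b : Λ), M ≤ w.length ∧ PrefIn X (a :: w) ∧
      PrefIn X (w ++ [b]) ∧ ¬ PrefIn X (a :: (w ++ [b])) := by
  obtain ⟨x0, hx0⟩ := hX.1
  set FM : Set (List Λ) := {w | w.length = M + 1 ∧ ¬ PrefIn X w} with hFM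
  have hFMfin : FM.Finite := (List.finite_length_eq Λ (M + 1)).subset fun w hw => hw.1
  have hXsub : X ⊆ ForbidSpace FM := by
    rintro x hx w hw ⟨n, hocc⟩
    exact hw.2 ⟨tail x n, tail_mem hX.2.2 hx n, fun i hi => hocc i hi⟩
  have hne : X ≠ ForbidSpace FM := fun h => hnot ⟨FM, hFMfin, h⟩
  obtain ⟨y, hyF, hyX⟩ : ∃ y, y ∈ ForbidSpace FM ∧ y ∉ X := by
    by_contra hcon
    push_neg at hcon
    exact hne (Set.Subset.antisymm hXsub hcon)
  have hseg : ∀ j L, L ≤ M + 1 → PrefIn X (seg y j L) := by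
    intro j L hL
    have h1 : PrefIn X (seg y j (M + 1)) := by
      by_contra hcon
      exact hyF (seg y j (M + 1)) ⟨by simp, hcon⟩
        ⟨j, fun i hi => (seg_get y (by simpa using hi)).symm⟩
    exact prefIn_seg_mono hX.2.2 h1 le_rfl (by omega)
  have hPrefNil : ∀ j, PrefIn X (seg y j 0) := fun j => hseg j 0 (by omega)
  obtain ⟨N0, hN0⟩ := closed_sep hX.2.1 hyX
  have hPex : ∃ N, ∀ x ∈ X, ¬ (∀ i < N, x i = y i) := ⟨N0, hN0⟩
  set N := Nat.find hPex with hNdef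
  have hPN : ∀ x ∈ X, ¬ (∀ i < N, x i = y i) := Nat.find_spec hPex
  have hNpos : 0 < N := by
    rcases Nat.eq_zero_or_pos N with h0 | h
    · exact absurd (fun i hi => absurd hi (by omega)) (h0 ▸ hPN x0 hx0)
    · exact h
  have hNotPref : ¬ PrefIn X (seg y 0 N) := by
    rintro ⟨x, hx, hp⟩
    rw [pref_seg_iff] at hp
    exact hPN x hx fun i hi => by simpa using hp i hi
  have hPrefN1 : PrefIn X (seg y 0 (N - 1)) := by
    have hmin : ¬ ∀ x ∈ X, ¬ (∀ i < N - 1, x i = y i) := Nat.find_min hPex (by omega)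
    push_neg at hmin
    obtain ⟨x, hx, hxy⟩ := hmin
    exact ⟨x, hx, pref_seg_iff.2 fun i hi => by rw [hxy i hi]; simp⟩
  have hQex : ∃ j, PrefIn X (seg y j (N - j)) := ⟨N, by simpa using hPrefNil N⟩
  set j0 := Nat.find hQex with hj0def
  have hQj0 : PrefIn X (seg y j0 (N - j0)) := Nat.find_spec hQex
  have hj0pos : 0 < j0 := by
    rcases Nat.eq_zero_or_pos j0 with h0 | h
    · rw [h0] at hQj0
      simp only [Nat.sub_zero] at hQj0
      exact absurd hQj0 hNotPref
    · exact h
  have hj0leN : j0 ≤ N := Nat.find_le (by simpa using hPrefNil N)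
  set k := j0 - 1 with hkdef
  have hnQk : ¬ PrefIn X (seg y k (N - k)) := Nat.find_min hQex (by omega)
  have hlenNk : M + 2 ≤ N - k := by
    by_contra hcon
    exact hnQk (hseg k (N - k) (by omega))
  clear_value k j0 N
  refine ⟨y k, seg y (k + 1) (N - k - 2), y (N - 1), by simp; omega, ?_, ?_, ?_⟩
  · have e1 : seg y k (N - k - 1) = y k :: seg y (k + 1) (N - k - 2) := by
      rw [show N - k - 1 = (N - k - 2) + 1 by omega, seg_cons]
    rw [← e1]
    exact prefIn_seg_mono hX.2.2 hPrefN1 (by omega) (by omega)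
  · have e2 : seg y (k + 1) (N - k - 1) = seg y (k + 1) (N - k - 2) ++ [y (N - 1)] := by
      rw [show N - k - 1 = (N - k - 2) + 1 by omega, seg_snoc,
        show k + 1 + (N - k - 2) = N - 1 by omega]
    rw [← e2]
    have : j0 = k + 1 := by omega
    rw [← this, show N - k - 1 = N - j0 by omega]
    exact hQj0
  · have e3 : seg y k (N - k) = y k :: (seg y (k + 1) (N - k - 2) ++ [y (N - 1)]) := by
      rw [show N - k = (N - k - 1) + 1 by omega, seg_cons,
        show N - k - 1 = (N - k - 2) + 1 by omega, seg_snoc,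
        show k + 1 + (N - k - 2) = N - 1 by omega,
        show N - k - 2 + 1 + 1 - 2 = N - k - 2 by omega]
    rw [← e3]
    exact hnQk


lemma surj_to_sft [Fintype Λ] [DecidableEq Λ] [TopologicalSpace Λ] [DiscreteTopology Λ]
    {X : Set (ℕ → Λ)} (hX : IsSubshift X)
    (hsurj : Omega X ⊆ (fun x => xiB X x) '' X) : IsSFT X := by
  by_contra hnot
  choose aa ww bb hlen hPaw hPwb hNawb using fun M => offender hX hnot M
  choose p hpX hp using hPaw
  choose q hqX hq using hPwb
  obtain ⟨𝒰, h𝒰⟩ := Ultrafilter.exists_le (Filter.atTop : Filter ℕ)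
  obtain ⟨a, ha⟩ := ultra_lim 𝒰 aa
  have haev : ∀ᶠ M in (𝒰 : Filter ℕ), aa M = a := ultra_eventually ha
  obtain ⟨z, hz⟩ := ultra_lim 𝒰 q
  have hzX : z ∈ X := hX.2.1.mem_of_tendsto hz (Filter.Eventually.of_forall hqX)
  have hzev : ∀ i, ∀ᶠ M in (𝒰 : Filter ℕ), q M i = z i := fun i =>
    ultra_eventually ((continuous_apply i).continuousAt.tendsto.comp hz)
  obtain ⟨yP, hyP⟩ := ultra_lim 𝒰 p
  have hyPX : yP ∈ X := hX.2.1.mem_of_tendsto hyP (Filter.Eventually.of_forall hpX)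
  have hyPev : ∀ i, ∀ᶠ M in (𝒰 : Filter ℕ), p M i = yP i := fun i =>
    ultra_eventually ((continuous_apply i).continuousAt.tendsto.comp hyP)
  have hwlen : ∀ i : ℕ, ∀ᶠ M in (𝒰 : Filter ℕ), i < (ww M).length := by
    intro i
    filter_upwards [h𝒰 (Filter.eventually_ge_atTop (i + 1))] with M hM
    have := hlen M
    omega
  -- yP = cat [a] z, hence cat [a] z ∈ X
  have hcaz : cat [a] z ∈ X := by
    have heq : yP = cat [a] z := by
      funext n
      cases n with
      | zero =>
        obtain ⟨M, h1, h2⟩ := ((hyPev 0).and haev).exists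
        have h3 : p M 0 = aa M := by
          have h4 := hp M 0 (by simp)
          simpa using h4
        rw [← h1, h3, h2, cat_eval_lt _ _ (by simp)]
        simp
      | succ i =>
        obtain ⟨M, h1, h2, h3⟩ := ((hyPev (i + 1)).and ((hzev i).and (hwlen i))).exists
        have h4 : p M (i + 1) = (ww M)[i] := by
          have h5 := hp M (i + 1) (by simp; omega)
          rw [h5]
          simp [List.getElem_cons_succ]
        have h6 : q M i = (ww M)[i] := by
          have h7 := hq M i (by simp; omega)
          rw [h7, List.getElem_append_left (by simpa using h3)]
        rw [← h1, h4, cat_eval_ge _ _ (by simp)]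
        simp only [List.length_cons, List.length_nil]
        rw [show i + 1 - 1 = i from rfl, ← h2, h6]
    rw [← heq]
    exact hyPX
  -- the limit point ξ of the ξ_{q M}
  obtain ⟨ξ, hξ⟩ := ultra_lim 𝒰 (fun M => xiB X (q M))
  have hξΩ : ξ ∈ Omega X :=
    mem_closure_of_tendsto hξ
      (Filter.Eventually.of_forall fun M => Set.mem_image_of_mem _ (hqX M))
  obtain ⟨x, hxX, hxξ⟩ := hsurj hξΩ
  simp only at hxξ
  have hξev : ∀ g, ∀ᶠ M in (𝒰 : Filter ℕ), xiB X (q M) g = ξ g := fun g =>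
    ultra_eventually ((continuous_apply g).continuousAt.tendsto.comp hξ)
  -- the stem of ξ is z, so x = z
  have hxz : x = z := by
    funext i
    have h1 : xiB X x (wd (seg x 0 (i + 1))) = true :=
      xiB_eq_true_iff.2 ((mem_xiSet_wd hX hxX _).2 (pref_seg_iff.2 fun j hj => by simp))
    have h2 : ξ (wd (seg x 0 (i + 1))) = true := by rw [← hxξ]; exact h1
    obtain ⟨M, hM1, hM2⟩ := ((hξev (wd (seg x 0 (i + 1)))).and (hzev i)).exists
    have h3 : xiB X (q M) (wd (seg x 0 (i + 1))) = true := by rw [hM1, h2]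
    have h4 : Pref (seg x 0 (i + 1)) (q M) := (mem_xiSet_wd hX (hqX M) _).1 (xiB_eq_true_iff.1 h3)
    have h5 : q M i = x i := by
      have h6 := pref_seg_iff.1 h4 i (by omega)
      simpa using h6
    rw [← hM2, h5]
  -- contradiction at the coordinate g = (wd [a])⁻¹
  have hξg : ξ ((wd [a])⁻¹) = true := by
    rw [← hxξ, hxz]
    exact xiB_eq_true_iff.2 ((mem_xiSet_inv hX hzX a).2 hcaz)
  obtain ⟨M, hM1, hM2⟩ := ((hξev ((wd [a])⁻¹)).and haev).exists
  have hfalse : xiB X (q M) ((wd [a])⁻¹) = false := by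
    rw [Bool.eq_false_iff]
    intro htrue
    have hc : cat [a] (q M) ∈ X := (mem_xiSet_inv hX (hqX M) a).1 (xiB_eq_true_iff.1 htrue)
    apply hNawb M
    refine ⟨cat [a] (q M), hc, ?_⟩
    intro i hi
    cases i with
    | zero =>
      rw [cat_eval_lt _ _ (by simp)]
      simp [hM2]
    | succ i' =>
      rw [cat_eval_ge _ _ (by simp)]
      simp only [List.length_cons, List.length_nil]
      rw [show i' + 1 - 1 = i' from rfl, List.getElem_cons_succ]
      exact hq M i' (by simp at hi ⊢; omega)
  rw [hM1, hξg] at hfalse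
  exact Bool.noConfusion hfalse

end Aux

/-- TFAE: `X` is of finite type; `Ξ` is onto `Ω_X`; `Ξ` is continuous;
`Ξ` is a homeomorphism from `X` onto `Ω_X`. -/
theorem sft_tfae {Λ : Type} [Fintype Λ] [Nonempty Λ] [DecidableEq Λ]
    [TopologicalSpace Λ] [DiscreteTopology Λ]
    (X : Set (ℕ → Λ)) (hX : IsSubshift X) :
    List.TFAE
      [IsSFT X,
       Omega X ⊆ (fun x => xiB X x) '' X,
       ContinuousOn (fun x => xiB X x) X,
       Set.BijOn (fun x => xiB X x) X (Omega X) ∧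
         ContinuousOn (fun x => xiB X x) X ∧
         ∀ V : Set (ℕ → Λ), IsOpen V →
           ∃ W : Set (FreeGroup Λ → Bool), IsOpen W ∧
             (fun x => xiB X x) '' (V ∩ X) = W ∩ Omega X] := by
  tfae_have 1 → 3 := fun h1 => sft_continuousOn hX h1
  tfae_have 3 → 2 := fun h3 => cont_to_surj hX h3
  tfae_have 2 → 1 := fun h2 => surj_to_sft hX h2
  tfae_have 4 → 3 := fun h4 => h4.2.1
  tfae_have 3 → 4 := by
    intro h3
    have h2 := cont_to_surj hX h3
    refine ⟨⟨fun x hx => subset_closure (Set.mem_image_of_mem _ hx), xi_injOn hX, h2⟩, h3, ?_⟩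
    intro V hV
    have hXc : IsCompact X := hX.2.1.isCompact
    have hclosed : IsClosed (X \ V) := hX.2.1.sdiff hV
    have hKc : IsCompact ((fun x => xiB X x) '' (X \ V)) :=
      (hXc.of_isClosed_subset hclosed Set.diff_subset).image_of_continuousOn
        (h3.mono Set.diff_subset)
    refine ⟨((fun x => xiB X x) '' (X \ V))ᶜ, hKc.isClosed.isOpen_compl, ?_⟩
    ext η
    constructor
    · rintro ⟨x, ⟨hxV, hxX⟩, rfl⟩
      refine ⟨?_, subset_closure (Set.mem_image_of_mem _ hxX)⟩
      rintro ⟨x', hx', hxx'⟩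
      have hxx : x' = x := xi_injOn hX hx'.1 hxX hxx'
      rw [hxx] at hx'
      exact hx'.2 hxV
    · rintro ⟨hW, hΩ⟩
      obtain ⟨x, hxX, rfl⟩ := h2 hΩ
      refine ⟨x, ⟨?_, hxX⟩, rfl⟩
      by_contra hxV
      exact hW (Set.mem_image_of_mem _ ⟨hxX, hxV⟩)
  tfae_finish

end SubshiftPaper
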